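/- Let n ≥ 1, let v ∈ X, and let U ⊆ X be such that the balls {B_u(Q^{n−1}/2)}_{u∈U} cover the ball B_v(Q^n), i.e., B_v(Q^n) ⊆ ⋃_{u∈U} B_u(Q^{n−1}/2). Then the probability that some level-n chunk of ε intersects B_v(Q^n/2) is at most ( Σ_{u∈U} Pr[some level-(n−1) chunk of ε intersects B_u(Q^{n−1}/2)] )². -/

import Mathlib

set_option linter.unusedSectionVars false



open scoped ENNReal

/-- A level-`n` chunk of the error configuration `ε`. -/
def IsChunk {X : Type*} [MetricSpace X] (Q : ℝ) (ε : Set X) : ℕ → Set X → Prop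
  | 0, C => ∃ x ∈ ε, C = {x}
  | n + 1, C => ∃ A B : Set X, IsChunk Q ε n A ∧ IsChunk Q ε n B ∧ Disjoint A B ∧
      C = A ∪ B ∧ Metric.diam C ≤ Q ^ (n + 1) / 2

/-- The Bernoulli(`p`) product measure: each point of `X` is included in the random subset
independently with probability `p` (for `p ∈ [0,1]`); a random subset is encoded as its
indicator function `f : X → Bool`, the subset being `{x | f x = true}`. -/
noncomputable def bernoulliProduct (X : Type*) [Fintype X] (p : ℝ) :
    MeasureTheory.Measure (X → Bool) :=
  MeasureTheory.Measure.pi fun _ =>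
    (PMF.bernoulli (min (Real.toNNReal p) 1) (min_le_right _ _)).toMeasure

namespace BKAux

open scoped Classical

variable {X : Type*} [Fintype X] [DecidableEq X]

/-- Weight of a configuration under the Bernoulli(p) product measure. -/
def wt (p : ℝ) (f : X → Bool) : ℝ := ∏ x, (if f x then p else 1 - p)

/-- Probability (as a real weighted sum) of an event. -/
noncomputable def PP (p : ℝ) (E : (X → Bool) → Prop) : ℝ :=
  ∑ f : X → Bool, (if E f then wt p f else 0)


lemma ite_nonneg {w : ℝ} (hw : 0 ≤ w) (P : Prop) (inst : Decidable P) :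
    0 ≤ (@ite _ P inst w 0) := by
  split <;> simp [hw]

lemma ite_le {w : ℝ} (hw : 0 ≤ w) (P : Prop) (inst : Decidable P) :
    (@ite _ P inst w 0) ≤ w := by
  split <;> simp [hw]

lemma wt_nonneg {p : ℝ} (hp0 : 0 ≤ p) (hp1 : p ≤ 1) (f : X → Bool) : 0 ≤ wt p f :=
  Finset.prod_nonneg fun x _ => by by_cases h : f x <;> simp [h] <;> linarith

lemma wt_total (p : ℝ) : ∑ f : X → Bool, wt p f = 1 := by
  have h := Finset.prod_univ_sum (κ := fun _ : X => Bool) (t := fun _ : X => (Finset.univ : Finset Bool))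
      (f := fun _ b => if b then p else 1 - p)
  rw [Fintype.piFinset_univ] at h
  unfold wt
  rw [← h]
  rw [Finset.prod_congr rfl (fun x _ => by rw [Fintype.sum_bool]; simp : ∀ x ∈ Finset.univ, _ = (1:ℝ))]
  simp

lemma PP_nonneg {p : ℝ} (hp0 : 0 ≤ p) (hp1 : p ≤ 1) (E : (X → Bool) → Prop) : 0 ≤ PP p E :=
  Finset.sum_nonneg fun f _ => by
    by_cases h : E f <;> simp [h, wt_nonneg hp0 hp1]

lemma PP_mono {p : ℝ} (hp0 : 0 ≤ p) (hp1 : p ≤ 1) {E F : (X → Bool) → Prop}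
    (h : ∀ f, E f → F f) : PP p E ≤ PP p F := by
  refine Finset.sum_le_sum fun f _ => ?_
  by_cases hE : E f
  · simp [hE, h f hE]
  · by_cases hF : F f <;> simp [hE, hF, wt_nonneg hp0 hp1]

lemma PP_exists_le {p : ℝ} (hp0 : 0 ≤ p) (hp1 : p ≤ 1) {ι : Type*} (U : Finset ι)
    (Ψ : ι → (X → Bool) → Prop) :
    PP p (fun f => ∃ u ∈ U, Ψ u f) ≤ ∑ u ∈ U, PP p (Ψ u) := by
  induction U using Finset.induction_on with
  | empty => simp [PP]
  | @insert a s ha ih =>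
      rw [Finset.sum_insert ha]
      have step : PP p (fun f => ∃ u ∈ insert a s, Ψ u f) ≤
          PP p (Ψ a) + PP p (fun f => ∃ u ∈ s, Ψ u f) := by
        unfold PP
        rw [← Finset.sum_add_distrib]
        refine Finset.sum_le_sum fun f _ => ?_
        by_cases h1 : Ψ a f
        · have hL : ∃ u ∈ insert a s, Ψ u f := ⟨a, Finset.mem_insert_self a s, h1⟩
          rw [if_pos hL, if_pos h1]
          exact le_add_of_nonneg_right (ite_nonneg (wt_nonneg hp0 hp1 f) _ _)
        · by_cases h2 : ∃ u ∈ s, Ψ u f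
          · have hL : ∃ u ∈ insert a s, Ψ u f := by
              obtain ⟨u, hu, h⟩ := h2
              exact ⟨u, Finset.mem_insert_of_mem hu, h⟩
            rw [if_pos hL, if_pos h2]
            exact le_add_of_nonneg_left (ite_nonneg (wt_nonneg hp0 hp1 f) _ _)
          · have hL : ¬ ∃ u ∈ insert a s, Ψ u f := by
              rintro ⟨u, hu, h⟩
              rcases Finset.mem_insert.1 hu with rfl | hu'
              · exact h1 h
              · exact h2 ⟨u, hu', h⟩
            rw [if_neg hL]
            exact add_nonneg (ite_nonneg (wt_nonneg hp0 hp1 f) _ _)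
              (ite_nonneg (wt_nonneg hp0 hp1 f) _ _)
      exact step.trans (add_le_add_right ih _)

/-- The set of "on" points of a configuration. -/
def eps (f : X → Bool) : Set X := {x | f x = true}

/-- Two disjoint witnesses, read off two (possibly different) configurations. -/
def Dver (G : Set X → Prop) (h k : X → Bool) : Prop :=
  ∃ A B : Set X, G A ∧ G B ∧ Disjoint A B ∧ A ⊆ eps h ∧ B ⊆ eps k

/-- One witness. -/
def EG (G : Set X → Prop) (f : X → Bool) : Prop := ∃ A : Set X, G A ∧ A ⊆ eps f

lemma eps_mono {h h' : X → Bool} (hh : ∀ y, h y = true → h' y = true) : eps h ⊆ eps h' :=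
  fun y hy => hh y hy

lemma Dver_mono {G : Set X → Prop} {h k h' k' : X → Bool}
    (hh : eps h ⊆ eps h') (hk : eps k ⊆ eps k') : Dver G h k → Dver G h' k' := by
  rintro ⟨A, B, hA, hB, hAB, hA', hB'⟩
  exact ⟨A, B, hA, hB, hAB, hA'.trans hh, hB'.trans hk⟩

/-- Hybrid configuration: reads `g` inside `K`, `f` outside. -/
def hyb (K : Finset X) (f g : X → Bool) : X → Bool := fun x => if x ∈ K then g x else f x

noncomputable def NN (p : ℝ) (G : Set X → Prop) (K : Finset X) : ℝ :=
  ∑ q : (X → Bool) × (X → Bool),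
    (if Dver G q.1 (hyb K q.1 q.2) then wt p q.1 * wt p q.2 else 0)

lemma NN_empty (p : ℝ) (G : Set X → Prop) : NN p G ∅ = PP p (fun f => Dver G f f) := by
  have hh : ∀ f g : X → Bool, hyb (∅ : Finset X) f g = f := by
    intro f g; funext y; simp [hyb]
  rw [NN, Fintype.sum_prod_type, PP]
  refine Finset.sum_congr rfl fun f _ => ?_
  rw [show (fun g => if Dver G f (hyb (∅ : Finset X) f g) then wt p f * wt p g else 0)
      = (fun g => if Dver G f f then wt p f * wt p g else 0) from funext fun g => by rw [hh f g]]
  by_cases hD : Dver G f f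
  · simp only [hD, if_true, ← Finset.mul_sum, wt_total, mul_one]
  · simp [hD]

lemma NN_univ_le {p : ℝ} (hp0 : 0 ≤ p) (hp1 : p ≤ 1) (G : Set X → Prop) :
    NN p G Finset.univ ≤ PP p (EG G) ^ 2 := by
  have huniv : ∀ f g : X → Bool, hyb (Finset.univ : Finset X) f g = g := by
    intro f g; funext y; simp [hyb]
  rw [NN, Fintype.sum_prod_type, sq, PP, Finset.sum_mul_sum]
  refine Finset.sum_le_sum fun f _ => Finset.sum_le_sum fun g _ => ?_
  by_cases hD : Dver G f (hyb Finset.univ f g)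
  · obtain ⟨A, B, hA, hB, hAB, hAe, hBe⟩ := id hD
    rw [huniv] at hBe
    have h1 : EG G f := ⟨A, hA, hAe⟩
    have h2 : EG G g := ⟨B, hB, hBe⟩
    rw [if_pos hD, if_pos h1, if_pos h2]
  · rw [if_neg hD]
    exact mul_nonneg (ite_nonneg (wt_nonneg hp0 hp1 f) _ _) (ite_nonneg (wt_nonneg hp0 hp1 g) _ _)

lemma wt_swap (p : ℝ) (f g : X → Bool) (x : X) :
    wt p (Function.update f x (g x)) * wt p (Function.update g x (f x)) = wt p f * wt p g := by
  have key : ∀ (h : X → Bool) (a : Bool), wt p (Function.update h x a)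
      = (if a then p else 1-p) * ∏ y ∈ Finset.univ.erase x, (if h y then p else 1-p) := by
    intro h a
    have e : (fun y => if Function.update h x a y then p else 1-p)
        = Function.update (fun y => if h y then p else 1-p) x (if a then p else 1-p) := by
      funext y
      by_cases hy : y = x
      · subst hy; simp
      · simp [Function.update_of_ne hy]
    rw [wt, e, Finset.prod_update_of_mem (Finset.mem_univ x), Finset.sdiff_singleton_eq_erase]
  have key2 : ∀ (h : X → Bool), wt p h
      = (if h x then p else 1-p) * ∏ y ∈ Finset.univ.erase x, (if h y then p else 1-p) :=
    fun h => (Finset.mul_prod_erase Finset.univ _ (Finset.mem_univ x)).symm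
  rw [key, key, key2 f, key2 g]
  ring

/-- A witness avoiding `x` is insensitive to the value at `x`. -/
lemma subset_update_of_not_mem {A : Set X} {h : X → Bool} {x : X} {a b : Bool}
    (hx : x ∉ A) (hA : A ⊆ eps (Function.update h x a)) : A ⊆ eps (Function.update h x b) := by
  intro y hy
  have hyx : y ≠ x := fun e => hx (e ▸ hy)
  have h1 : Function.update h x a y = true := hA hy
  rw [Function.update_of_ne hyx] at h1
  show Function.update h x b y = true
  rw [Function.update_of_ne hyx]
  exact h1

lemma ite_tech {w : ℝ} (hw : 0 ≤ w) (Ψ : Bool → Bool → Prop)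
    (mono : ∀ d, Ψ false d → Ψ true d) (mono' : ∀ c, Ψ c false → Ψ c true)
    (split : Ψ true true → Ψ false true ∨ Ψ true false) (a b : Bool) :
    (if Ψ a a then w else 0) + (if Ψ b b then w else 0) ≤
      (if Ψ a b then w else 0) + (if Ψ b a then w else 0) := by
  cases a <;> cases b
  · exact le_refl _
  · by_cases h1 : Ψ false false <;> by_cases h2 : Ψ true true <;>
      by_cases h3 : Ψ false true <;> by_cases h4 : Ψ true false <;>
      simp only [h1, h2, h3, h4, if_true, if_false] <;>
      first
        | linarith
        | (exact absurd (mono' _ h1) h3)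
        | (exact absurd (mono _ h1) h4)
        | (rcases split h2 with h | h <;> first | exact absurd h h3 | exact absurd h h4)
  · by_cases h1 : Ψ false false <;> by_cases h2 : Ψ true true <;>
      by_cases h3 : Ψ false true <;> by_cases h4 : Ψ true false <;>
      simp only [h1, h2, h3, h4, if_true, if_false] <;>
      first
        | linarith
        | (exact absurd (mono' _ h1) h3)
        | (exact absurd (mono _ h1) h4)
        | (rcases split h2 with h | h <;> first | exact absurd h h3 | exact absurd h h4)
  · exact le_refl _

lemma NN_step {p : ℝ} (hp0 : 0 ≤ p) (hp1 : p ≤ 1) (G : Set X → Prop) {x : X} {K : Finset X}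
    (hx : x ∉ K) : NN p G K ≤ NN p G (insert x K) := by
  have hτ : Function.Involutive (fun q : (X → Bool) × (X → Bool) =>
      (Function.update q.1 x (q.2 x), Function.update q.2 x (q.1 x))) := by
    rintro ⟨f, g⟩
    simp [Prod.ext_iff, Function.update_idem]
  have reindex : ∀ K' : Finset X,
      (∑ q : (X → Bool) × (X → Bool), (if Dver G (Function.update q.1 x (q.2 x))
          (hyb K' (Function.update q.1 x (q.2 x)) (Function.update q.2 x (q.1 x))) then
          wt p (Function.update q.1 x (q.2 x)) * wt p (Function.update q.2 x (q.1 x)) else 0))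
      = NN p G K' := by
    intro K'
    exact Fintype.sum_bijective _ hτ.bijective _ _ (fun q => rfl)
  have key : ∀ f g : X → Bool,
      (if Dver G f (hyb K f g) then wt p f * wt p g else 0)
      + (if Dver G (Function.update f x (g x))
            (hyb K (Function.update f x (g x)) (Function.update g x (f x))) then
          wt p (Function.update f x (g x)) * wt p (Function.update g x (f x)) else 0)
      ≤ (if Dver G f (hyb (insert x K) f g) then wt p f * wt p g else 0)
      + (if Dver G (Function.update f x (g x))
            (hyb (insert x K) (Function.update f x (g x)) (Function.update g x (f x))) then
          wt p (Function.update f x (g x)) * wt p (Function.update g x (f x)) else 0) := by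
    intro f g
    have hb : hyb K f g x = f x := by simp [hyb, hx]
    have e1 : Function.update f x (f x) = f := Function.update_eq_self x f
    have e2 : Function.update (hyb K f g) x (f x) = hyb K f g := by
      nth_rewrite 1 [← hb]
      exact Function.update_eq_self x (hyb K f g)
    have e3 : hyb K (Function.update f x (g x)) (Function.update g x (f x))
        = Function.update (hyb K f g) x (g x) := by
      funext y
      by_cases hyx : y = x
      · subst hyx; simp [hyb, hx]
      · by_cases hyK : y ∈ K <;> simp [hyb, hyK, Function.update_of_ne hyx]
    have e4 : hyb (insert x K) f g = Function.update (hyb K f g) x (g x) := by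
      funext y
      by_cases hyx : y = x
      · subst hyx; simp [hyb]
      · simp [hyb, Finset.mem_insert, hyx, Function.update_of_ne hyx]
    have e5 : hyb (insert x K) (Function.update f x (g x)) (Function.update g x (f x))
        = Function.update (hyb K f g) x (f x) := by
      funext y
      by_cases hyx : y = x
      · subst hyx; simp [hyb]
      · by_cases hyK : y ∈ K <;>
          simp [hyb, Finset.mem_insert, hyx, hyK, Function.update_of_ne hyx]
    rw [e3, e4, e5, wt_swap p f g x]
    rw [show Dver G f (hyb K f g)
        = Dver G (Function.update f x (f x)) (Function.update (hyb K f g) x (f x)) from by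
      rw [e1, e2]]
    rw [show Dver G f (Function.update (hyb K f g) x (g x))
        = Dver G (Function.update f x (f x)) (Function.update (hyb K f g) x (g x)) from by
      rw [e1]]
    have epsup : ∀ (h : X → Bool) (c : Bool),
        eps (Function.update h x c) ⊆ eps (Function.update h x true) := by
      intro h c y hy
      by_cases hyx : y = x
      · subst hyx; show Function.update h y true y = true; rw [Function.update_self]
      · have h1 : Function.update h x c y = true := hy
        rw [Function.update_of_ne hyx] at h1
        show Function.update h x true y = true
        rw [Function.update_of_ne hyx]
        exact h1
    have epsdown : ∀ (h : X → Bool), eps (Function.update h x false) ⊆ eps h := by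
      intro h y hy
      by_cases hyx : y = x
      · subst hyx
        have h1 : Function.update h y false y = true := hy
        rw [Function.update_self] at h1
        exact absurd h1 (by simp)
      · have h1 : Function.update h x false y = true := hy
        rw [Function.update_of_ne hyx] at h1
        exact h1
    refine ite_tech (mul_nonneg (wt_nonneg hp0 hp1 f) (wt_nonneg hp0 hp1 g))
      (fun c d => Dver G (Function.update f x c) (Function.update (hyb K f g) x d))
      ?_ ?_ ?_ (f x) (g x)
    · intro d hΨ
      exact Dver_mono (epsup f false) (le_refl _) hΨ
    · intro c hΨ
      exact Dver_mono (le_refl _) (epsup (hyb K f g) false) hΨ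
    · rintro ⟨A, B, hA, hB, hAB, hAe, hBe⟩
      by_cases hxA : x ∈ A
      · have hxB : x ∉ B := Set.disjoint_left.1 hAB hxA
        exact Or.inr ⟨A, B, hA, hB, hAB, hAe, subset_update_of_not_mem hxB hBe⟩
      · exact Or.inl ⟨A, B, hA, hB, hAB, subset_update_of_not_mem hxA hAe, hBe⟩
  have h2 : NN p G K + NN p G K ≤ NN p G (insert x K) + NN p G (insert x K) := by
    nth_rewrite 2 [← reindex K]
    nth_rewrite 2 [← reindex (insert x K)]
    simp only [NN]
    rw [← Finset.sum_add_distrib, ← Finset.sum_add_distrib]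
    exact Finset.sum_le_sum fun q _ => key q.1 q.2
  linarith

lemma NN_mono_univ {p : ℝ} (hp0 : 0 ≤ p) (hp1 : p ≤ 1) (G : Set X → Prop) :
    NN p G ∅ ≤ NN p G Finset.univ := by
  have H : ∀ K : Finset X, NN p G ∅ ≤ NN p G K := by
    intro K
    induction K using Finset.induction_on with
    | empty => exact le_refl _
    | @insert a s ha ih => exact ih.trans (NN_step hp0 hp1 G ha)
  exact H Finset.univ

/-- Core BK-type inequality for disjointly witnessed events. -/
lemma core {p : ℝ} (hp0 : 0 ≤ p) (hp1 : p ≤ 1) (G : Set X → Prop) :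
    PP p (fun f => Dver G f f) ≤ PP p (EG G) ^ 2 :=
  (NN_empty p G) ▸ (NN_mono_univ hp0 hp1 G).trans (NN_univ_le hp0 hp1 G)

/-- The bernoulliProduct measure of an event equals the weighted sum over configurations. -/
lemma bridge {p : ℝ} (hp0 : 0 ≤ p) (hp1 : p ≤ 1) (E : (X → Bool) → Prop) :
    bernoulliProduct X p {f | E f} = ENNReal.ofReal (PP p E) := by
  have hq : min (Real.toNNReal p) 1 = Real.toNNReal p :=
    min_eq_left (Real.toNNReal_le_one.2 hp1)
  have hsingle : ∀ f : X → Bool, bernoulliProduct X p {f} = ENNReal.ofReal (wt p f) := by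
    intro f
    rw [show ({f} : Set (X → Bool)) = Set.pi Set.univ (fun x => {f x}) from
      (Set.univ_pi_singleton f).symm]
    rw [bernoulliProduct, MeasureTheory.Measure.pi_pi]
    rw [wt, ENNReal.ofReal_prod_of_nonneg
      (fun x _ => by by_cases h : f x <;> simp [h] <;> linarith)]
    refine Finset.prod_congr rfl fun x _ => ?_
    rw [PMF.toMeasure_apply_singleton _ _ (measurableSet_singleton _), PMF.bernoulli_apply, hq]
    cases hfx : f x
    · simp only [Bool.cond_false, hfx, Bool.false_eq_true, if_false]
      rw [ENNReal.coe_sub, ENNReal.coe_one, ENNReal.ofReal_sub 1 hp0, ENNReal.ofReal_one]; rfl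
    · simp [hfx]; rfl
  have hdisj : (↑(Finset.univ.filter (fun f : X → Bool => E f)) :
      Set (X → Bool)).PairwiseDisjoint (fun f => ({f} : Set (X → Bool))) := by
    intro f _ g _ hfg
    simp only [Function.onFun, Set.disjoint_singleton]
    exact hfg
  have hcov : {f | E f} =
      ⋃ f ∈ Finset.univ.filter (fun f : X → Bool => E f), ({f} : Set (X → Bool)) := by
    ext g; simp
  calc bernoulliProduct X p {f | E f}
      = ∑ f ∈ Finset.univ.filter (fun f : X → Bool => E f), bernoulliProduct X p {f} := by
        rw [hcov]
        exact MeasureTheory.measure_biUnion_finset hdisj (fun f _ => measurableSet_singleton f)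
    _ = ∑ f ∈ Finset.univ.filter (fun f : X → Bool => E f), ENNReal.ofReal (wt p f) :=
        Finset.sum_congr rfl fun f _ => hsingle f
    _ = ENNReal.ofReal (∑ f ∈ Finset.univ.filter (fun f : X → Bool => E f), wt p f) :=
        (ENNReal.ofReal_sum_of_nonneg (fun f _ => wt_nonneg hp0 hp1 f)).symm
    _ = ENNReal.ofReal (PP p E) := by
        unfold PP
        rw [Finset.sum_filter]

end BKAux

section Chunks

variable {Y : Type*} [MetricSpace Y] {Q : ℝ}

lemma isChunk_nonempty {ε : Set Y} {m : ℕ} {C : Set Y} (h : IsChunk Q ε m C) : C.Nonempty := by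
  induction m generalizing C with
  | zero => obtain ⟨x, _, rfl⟩ := h; exact ⟨x, rfl⟩
  | succ m ih =>
      obtain ⟨A, B, hA, _, _, rfl, _⟩ := h
      exact (ih hA).mono Set.subset_union_left

lemma isChunk_subset {ε : Set Y} {m : ℕ} {C : Set Y} (h : IsChunk Q ε m C) : C ⊆ ε := by
  induction m generalizing C with
  | zero => obtain ⟨x, hx, rfl⟩ := h; exact Set.singleton_subset_iff.2 hx
  | succ m ih =>
      obtain ⟨A, B, hA, hB, _, rfl, _⟩ := h
      exact Set.union_subset (ih hA) (ih hB)

lemma isChunk_mono {ε ε' : Set Y} (hε : ε ⊆ ε') {m : ℕ} {C : Set Y}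
    (h : IsChunk Q ε m C) : IsChunk Q ε' m C := by
  induction m generalizing C with
  | zero => obtain ⟨x, hx, rfl⟩ := h; exact ⟨x, hε hx, rfl⟩
  | succ m ih =>
      obtain ⟨A, B, hA, hB, hd, rfl, hdiam⟩ := h
      exact ⟨A, B, ih hA, ih hB, hd, rfl, hdiam⟩

lemma isChunk_of_univ {ε : Set Y} {m : ℕ} {C : Set Y}
    (h : IsChunk Q Set.univ m C) (hC : C ⊆ ε) : IsChunk Q ε m C := by
  induction m generalizing C with
  | zero =>
      obtain ⟨x, _, rfl⟩ := h
      exact ⟨x, hC (Set.mem_singleton x), rfl⟩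
  | succ m ih =>
      obtain ⟨A, B, hA, hB, hd, rfl, hdiam⟩ := h
      exact ⟨A, B, ih hA (Set.subset_union_left.trans hC),
        ih hB (Set.subset_union_right.trans hC), hd, rfl, hdiam⟩

end Chunks

theorem statement6 {X : Type*} [MetricSpace X] [Fintype X] (Q p : ℝ) (hQ : 6 ≤ Q)
    (hp0 : 0 ≤ p) (hp1 : p ≤ 1) (n : ℕ) (hn : 1 ≤ n) (v : X) (U : Finset X)
    (hcover : Metric.ball v (Q ^ n) ⊆ ⋃ u ∈ U, Metric.ball (u : X) (Q ^ (n - 1) / 2)) :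
    bernoulliProduct X p
      {f | ∃ C : Set X, IsChunk Q {x | f x = true} n C ∧
        (C ∩ Metric.ball v (Q ^ n / 2)).Nonempty} ≤
    (∑ u ∈ U, bernoulliProduct X p
      {f | ∃ C : Set X, IsChunk Q {x | f x = true} (n - 1) C ∧
        (C ∩ Metric.ball (u : X) (Q ^ (n - 1) / 2)).Nonempty}) ^ 2 := by
  classical
  obtain ⟨m, rfl⟩ : ∃ m, n = m + 1 := ⟨n - 1, (Nat.succ_pred_eq_of_pos hn).symm⟩
  simp only [Nat.add_sub_cancel] at hcover ⊢
  set G : Set X → Prop := fun A =>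
    IsChunk Q Set.univ m A ∧ ∃ u ∈ U, (A ∩ Metric.ball (u : X) (Q ^ m / 2)).Nonempty with hG
  -- the deterministic step: a level-(m+1) chunk meeting the small ball yields
  -- two disjoint level-m witnesses
  have step1 : ∀ f : X → Bool, (∃ C : Set X, IsChunk Q {x | f x = true} (m + 1) C ∧
      (C ∩ Metric.ball v (Q ^ (m + 1) / 2)).Nonempty) → BKAux.Dver G f f := by
    rintro f ⟨C, hC, hCb⟩
    obtain ⟨A, B, hA, hB, hAB, rfl, hdiam⟩ := hC
    obtain ⟨c, hcC, hcb⟩ := hCb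
    have hsub : A ∪ B ⊆ Metric.ball v (Q ^ (m + 1)) := by
      intro a ha
      rw [Metric.mem_ball]
      have h1 : dist a c ≤ Q ^ (m + 1) / 2 :=
        le_trans (Metric.dist_le_diam_of_mem (Set.toFinite _).isBounded ha hcC) hdiam
      have h2 : dist c v < Q ^ (m + 1) / 2 := Metric.mem_ball.1 hcb
      calc dist a v ≤ dist a c + dist c v := dist_triangle a c v
        _ < Q ^ (m + 1) / 2 + Q ^ (m + 1) / 2 := by linarith
        _ = Q ^ (m + 1) := by ring
    have keyD : ∀ D : Set X, IsChunk Q {x | f x = true} m D → D ⊆ A ∪ B → G D := by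
      intro D hD hDsub
      obtain ⟨d, hd⟩ := isChunk_nonempty hD
      have hmem : d ∈ ⋃ u ∈ U, Metric.ball (u : X) (Q ^ m / 2) := hcover (hsub (hDsub hd))
      rw [Set.mem_iUnion₂] at hmem
      obtain ⟨u, hu, hdu⟩ := hmem
      exact ⟨isChunk_mono (Set.subset_univ _) hD, u, hu, d, hd, hdu⟩
    exact ⟨A, B, keyD A hA Set.subset_union_left, keyD B hB Set.subset_union_right, hAB,
      isChunk_subset hA, isChunk_subset hB⟩
  have step2 : ∀ f : X → Bool, BKAux.EG G f → ∃ u ∈ U, (∃ C : Set X,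
      IsChunk Q {x | f x = true} m C ∧
      (C ∩ Metric.ball (u : X) (Q ^ m / 2)).Nonempty) := by
    rintro f ⟨A, ⟨hchunk, u, hu, hball⟩, hsub⟩
    exact ⟨u, hu, A, isChunk_of_univ hchunk hsub, hball⟩
  have realchain : BKAux.PP p (fun f : X → Bool =>
        ∃ C : Set X, IsChunk Q {x | f x = true} (m + 1) C ∧
          (C ∩ Metric.ball v (Q ^ (m + 1) / 2)).Nonempty)
      ≤ (∑ u ∈ U, BKAux.PP p (fun f : X → Bool =>
          ∃ C : Set X, IsChunk Q {x | f x = true} m C ∧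
            (C ∩ Metric.ball (u : X) (Q ^ m / 2)).Nonempty)) ^ 2 := by
    refine le_trans (BKAux.PP_mono hp0 hp1 step1) ?_
    refine le_trans (BKAux.core hp0 hp1 G) ?_
    have h3 : BKAux.PP p (BKAux.EG G) ≤ ∑ u ∈ U, BKAux.PP p (fun f : X → Bool =>
        ∃ C : Set X, IsChunk Q {x | f x = true} m C ∧
          (C ∩ Metric.ball (u : X) (Q ^ m / 2)).Nonempty) :=
      le_trans (BKAux.PP_mono hp0 hp1 step2) (BKAux.PP_exists_le hp0 hp1 U _)
    exact pow_le_pow_left₀ (BKAux.PP_nonneg hp0 hp1 _) h3 2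
  rw [BKAux.bridge hp0 hp1]
  have hRHS : (∑ u ∈ U, bernoulliProduct X p
      {f | ∃ C : Set X, IsChunk Q {x | f x = true} m C ∧
        (C ∩ Metric.ball (u : X) (Q ^ m / 2)).Nonempty}) ^ 2
      = ENNReal.ofReal ((∑ u ∈ U, BKAux.PP p (fun f : X → Bool =>
          ∃ C : Set X, IsChunk Q {x | f x = true} m C ∧
            (C ∩ Metric.ball (u : X) (Q ^ m / 2)).Nonempty)) ^ 2) := by
    rw [ENNReal.ofReal_pow (Finset.sum_nonneg fun u _ => BKAux.PP_nonneg hp0 hp1 _),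
      ENNReal.ofReal_sum_of_nonneg (fun u _ => BKAux.PP_nonneg hp0 hp1 _)]
    congr 1
    exact Finset.sum_congr rfl fun u _ => BKAux.bridge hp0 hp1 _
  rw [hRHS]
  exact ENNReal.ofReal_le_ofReal realchain
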